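/- Average posterior mean lies between the state and the prior mean (Proposition 1). Let f_X be a quasi-concave density symmetric about its mean μ, and let f_ε be a quasi-concave density symmetric about 0. Let m(s) := E[X|S=s] denote the posterior mean given signal realization s. Then for every state x ≤ μ: x ≤ ∫ m(s)·f_ε(s−x) ds ≤ μ, and for every state x ≥ μ: μ ≤ ∫ m(s)·f_ε(s−x) ds ≤ x. (Here ∫ m(s)·f_ε(s−x) ds is the average posterior mean conditional on X = x.) -/

import Mathlib

open MeasureTheory Real Set

noncomputable section

/-- A density: everywhere positive, continuously differentiable, integrates to 1,
with finite first absolute moment. -/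
def IsDensity (f : ℝ → ℝ) : Prop :=
  (∀ x, 0 < f x) ∧ ContDiff ℝ 1 f ∧ (∫ x, f x) = 1 ∧
    MeasureTheory.Integrable (fun x => |x| * f x)

/-- `f` is symmetric about `m`. -/
def SymmAbout (m : ℝ) (f : ℝ → ℝ) : Prop := ∀ x, f (m + x) = f (m - x)

/-- `f` is quasi-concave. -/
def QuasiConcaveFn (f : ℝ → ℝ) : Prop :=
  ∀ x y t : ℝ, 0 ≤ t → t ≤ 1 → min (f x) (f y) ≤ f (t * x + (1 - t) * y)

/-- `f` is log-concave. -/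
def LogConcaveFn (f : ℝ → ℝ) : Prop := ConcaveOn ℝ Set.univ fun x => Real.log (f x)

/-- `g` is less precise than `f`: the ratio `g/f` is nondecreasing on `(0, ∞)`. -/
def LessPrecise (g f : ℝ → ℝ) : Prop := MonotoneOn (fun x => g x / f x) (Set.Ioi 0)

/-- Posterior mean at signal realization `s` under prior `fX` and noise density `fε`. -/
def postMean (fX fε : ℝ → ℝ) (s : ℝ) : ℝ :=
  (∫ x, x * fX x * fε (s - x)) / (∫ x, fX x * fε (s - x))

/- ----------------- auxiliary lemmas ----------------- -/

lemma abs_add_le_abs_sub' {t u : ℝ} (ht : t ≤ 0) (hu : 0 ≤ u) : |t + u| ≤ |t - u| := by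
  rw [abs_of_nonpos (show t - u ≤ 0 by linarith), abs_le]
  constructor <;> linarith

lemma abs_add_le_abs_sub'' {t u : ℝ} (ht : 0 ≤ t) (hu : u ≤ 0) : |t + u| ≤ |t - u| := by
  have := abs_add_le_abs_sub' (t := -t) (u := -u) (by linarith) (by linarith)
  have e1 : -t + -u = -(t + u) := by ring
  have e2 : -t - -u = -(t - u) := by ring
  rwa [e1, e2, abs_neg, abs_neg] at this

lemma unimodal_of (f : ℝ → ℝ) (c : ℝ) (hsym : SymmAbout c f) (hqc : QuasiConcaveFn f) :
    ∀ u v : ℝ, |u| ≤ |v| → f (c + v) ≤ f (c + u) := by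
  have habs : ∀ u : ℝ, f (c + u) = f (c + |u|) := by
    intro u
    rcases abs_cases u with ⟨h, _⟩ | ⟨h, _⟩
    · rw [h]
    · rw [h]
      have := hsym (-u)
      simpa [sub_neg_eq_add, sub_eq_add_neg] using this.symm
  intro u v huv
  rw [habs u, habs v]
  set p := |u| with hp'
  set q := |v| with hq'
  have hp : 0 ≤ p := abs_nonneg u
  have hq : 0 ≤ q := abs_nonneg v
  rcases eq_or_lt_of_le hq with h0 | hqpos
  · have : p = 0 := le_antisymm (huv.trans h0.symm.le) hp
    rw [this, ← h0]
  · have hfc : f (c + q) ≤ f c := by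
      have h2 := hqc (c + q) (c - q) (1/2) (by norm_num) (by norm_num)
      have : (1/2 : ℝ) * (c + q) + (1 - 1/2) * (c - q) = c := by ring
      rw [this, ← hsym q, min_self] at h2
      exact h2
    have h3 := hqc (c + q) c (p / q) (div_nonneg hp hq) (by
      rw [div_le_one hqpos]; exact huv)
    have heq : (p / q) * (c + q) + (1 - p / q) * c = c + p := by
      field_simp
      ring
    rw [heq, min_eq_left hfc] at h3
    exact h3

lemma integral_flip (c : ℝ) (ψ : ℝ → ℝ) : (∫ x, ψ (c - x)) = ∫ x, ψ x := by
  calc (∫ x, ψ (c - x)) = ∫ x, ψ (c + -x) := by simp only [sub_eq_add_neg]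
  _ = ∫ x, ψ (c + x) := by simpa using integral_neg_eq_self (fun x => ψ (c + x)) volume
  _ = ∫ x, ψ x := integral_add_left_eq_self ψ _

lemma integral_nonneg_pair (c : ℝ) (φ : ℝ → ℝ) (hi : Integrable φ)
    (h : ∀ u, 0 ≤ φ (c + u) + φ (c - u)) : 0 ≤ ∫ u, φ u := by
  have h1 : Integrable (fun u => φ (c + u)) := hi.comp_add_left c
  have h2 : Integrable (fun u => φ (c - u)) := hi.comp_sub_left c
  have hsum : 0 ≤ ∫ u, (φ (c + u) + φ (c - u)) := integral_nonneg h
  rw [integral_add h1 h2] at hsum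
  have e1 : (∫ u, φ (c + u)) = ∫ u, φ u := integral_add_left_eq_self φ c
  have e2 : (∫ u, φ (c - u)) = ∫ u, φ u := integral_flip c φ
  rw [e1, e2] at hsum
  linarith

lemma integral_eq_zero_pair (c : ℝ) (φ : ℝ → ℝ) (hi : Integrable φ)
    (h : ∀ u, φ (c + u) + φ (c - u) = 0) : (∫ u, φ u) = 0 := by
  have h1 := integral_nonneg_pair c φ hi (fun u => (h u).ge)
  have h2 := integral_nonneg_pair c (fun u => -φ u) hi.neg (fun u => by
    have := h u; linarith)
  rw [integral_neg] at h2
  linarith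

lemma integrable_of_integral_one {f : ℝ → ℝ} (h : (∫ x, f x) = 1) : Integrable f := by
  by_contra hc
  rw [integral_undef hc] at h
  norm_num at h

/- ----------------- main theorem ----------------- -/

/-- Proposition 1: the average posterior mean conditional on the state lies
between the state and the prior mean. -/
theorem average_posterior_mean_between
    (fX fε : ℝ → ℝ) (μ : ℝ)
    (hfX : IsDensity fX) (hfXsym : SymmAbout μ fX) (hfXqc : QuasiConcaveFn fX)
    (hμ : μ = ∫ x, x * fX x)
    (hfε : IsDensity fε) (hfεsym : SymmAbout 0 fε) (hfεqc : QuasiConcaveFn fε) :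
    (∀ x ≤ μ, x ≤ ∫ s, postMean fX fε s * fε (s - x) ∧
        (∫ s, postMean fX fε s * fε (s - x)) ≤ μ) ∧
    (∀ x, μ ≤ x → μ ≤ ∫ s, postMean fX fε s * fε (s - x) ∧
        (∫ s, postMean fX fε s * fε (s - x)) ≤ x) := by
  obtain ⟨hXpos, hXsm, hXone, hXmom⟩ := hfX
  obtain ⟨hεpos, hεsm, hεone, hεmom⟩ := hfε
  have hXc : Continuous fX := hXsm.continuous
  have hεc : Continuous fε := hεsm.continuous
  have hXint : Integrable fX := integrable_of_integral_one hXone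
  have hεint : Integrable fε := integrable_of_integral_one hεone
  -- unimodality
  have unimX : ∀ u v : ℝ, |u| ≤ |v| → fX (μ + v) ≤ fX (μ + u) :=
    unimodal_of fX μ hfXsym hfXqc
  have unimε : ∀ u v : ℝ, |u| ≤ |v| → fε v ≤ fε u := by
    intro u v h
    have := unimodal_of fε 0 hfεsym hfεqc u v h
    simpa using this
  have hεb : ∀ y, fε y ≤ fε 0 := fun y => unimε 0 y (by simp)
  have hεeven : ∀ y, fε (-y) = fε y := by
    intro y
    have := hfεsym y
    simpa using this.symm
  have hXrefl : ∀ y, fX (2 * μ - y) = fX y := by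
    intro y
    have := hfXsym (y - μ)
    have e1 : μ + (y - μ) = y := by ring
    have e2 : μ - (y - μ) = 2 * μ - y := by ring
    rw [e1, e2] at this
    exact this.symm
  -- integrability in x, for each fixed s
  have Dint : ∀ s : ℝ, Integrable (fun x => fX x * fε (s - x)) := by
    intro s
    refine Integrable.mono' (hXint.const_mul (fε 0)) ?_ ?_
    · exact (hXc.aestronglyMeasurable.mul
        ((hεc.comp (continuous_const.sub continuous_id)).aestronglyMeasurable))
    · filter_upwards with x
      rw [Real.norm_eq_abs, abs_of_nonneg (mul_nonneg (hXpos x).le (hεpos _).le)]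
      calc fX x * fε (s - x) ≤ fX x * fε 0 :=
            mul_le_mul_of_nonneg_left (hεb _) (hXpos x).le
        _ = fε 0 * fX x := by ring
  have Nint : ∀ s : ℝ, Integrable (fun x => x * fX x * fε (s - x)) := by
    intro s
    refine Integrable.mono' (hXmom.const_mul (fε 0)) ?_ ?_
    · exact ((continuous_id.mul hXc).mul
        (hεc.comp (continuous_const.sub continuous_id))).aestronglyMeasurable
    · filter_upwards with x
      rw [Real.norm_eq_abs, abs_mul, abs_mul, abs_of_nonneg (hXpos x).le,
        abs_of_nonneg (hεpos _).le]
      calc |x| * fX x * fε (s - x) ≤ |x| * fX x * fε 0 :=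
            mul_le_mul_of_nonneg_left (hεb _) (mul_nonneg (abs_nonneg x) (hXpos x).le)
        _ = fε 0 * (|x| * fX x) := by ring
  -- denominator positive
  have Dpos : ∀ s : ℝ, 0 < ∫ x, fX x * fε (s - x) := by
    intro s
    rw [integral_pos_iff_support_of_nonneg_ae
      (Filter.Eventually.of_forall fun x => mul_nonneg (hXpos x).le (hεpos _).le) (Dint s)]
    have : Function.support (fun x => fX x * fε (s - x)) = Set.univ := by
      ext x
      simp only [Function.support, Set.mem_setOf_eq, Set.mem_univ, iff_true, ne_eq,
        mul_eq_zero, not_or]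
      exact ⟨(hXpos x).ne', (hεpos _).ne'⟩
    rw [this]
    simp
  -- m(s) ≤ μ for s ≤ μ
  have m_le : ∀ s ≤ μ, postMean fX fε s ≤ μ := by
    intro s hs
    rw [postMean, div_le_iff₀ (Dpos s)]
    have key : 0 ≤ ∫ x, (μ - x) * (fX x * fε (s - x)) := by
      apply integral_nonneg_pair μ
      · have : (fun x => (μ - x) * (fX x * fε (s - x)))
            = fun x => μ * (fX x * fε (s - x)) - x * fX x * fε (s - x) := by
          funext x; ring
        rw [this]
        exact ((Dint s).const_mul μ).sub (Nint s)
      · intro u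
        have e : (μ - (μ + u)) * (fX (μ + u) * fε (s - (μ + u)))
            + (μ - (μ - u)) * (fX (μ - u) * fε (s - (μ - u)))
            = u * fX (μ + u) * (fε (s - μ + u) - fε (s - μ - u)) := by
          rw [← hfXsym u]
          have e1 : s - (μ + u) = s - μ - u := by ring
          have e2 : s - (μ - u) = s - μ + u := by ring
          rw [e1, e2]; ring
        rw [e]
        rcases le_total 0 u with hu | hu
        · have hle : fε (s - μ - u) ≤ fε (s - μ + u) := by
            apply unimε
            have := abs_add_le_abs_sub' (t := s - μ) (u := u) (by linarith) hu
            simpa [sub_eq_add_neg] using this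
          have : 0 ≤ fε (s - μ + u) - fε (s - μ - u) := by linarith
          exact mul_nonneg (mul_nonneg hu (hXpos _).le) this
        · have hle : fε (s - μ + u) ≤ fε (s - μ - u) := by
            apply unimε
            have := abs_add_le_abs_sub' (t := s - μ) (u := -u) (by linarith) (by linarith)
            have e1 : s - μ + -u = s - μ - u := by ring
            have e2 : s - μ - -u = s - μ + u := by ring
            rwa [e1, e2] at this
          have h2 : fε (s - μ + u) - fε (s - μ - u) ≤ 0 := by linarith
          have h1 : u * fX (μ + u) ≤ 0 :=
            mul_nonpos_of_nonpos_of_nonneg hu (hXpos _).le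
          nlinarith
    have expand : (∫ x, (μ - x) * (fX x * fε (s - x)))
        = μ * (∫ x, fX x * fε (s - x)) - ∫ x, x * fX x * fε (s - x) := by
      have : (fun x => (μ - x) * (fX x * fε (s - x)))
          = fun x => μ * (fX x * fε (s - x)) - x * fX x * fε (s - x) := by
        funext x; ring
      rw [this, integral_sub ((Dint s).const_mul μ) (Nint s), integral_const_mul]
    rw [expand] at key
    linarith
  -- m(s) ≥ s for s ≤ μ
  have m_ge : ∀ s ≤ μ, s ≤ postMean fX fε s := by
    intro s hs
    rw [postMean, le_div_iff₀ (Dpos s)]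
    have key : 0 ≤ ∫ x, (x - s) * (fX x * fε (s - x)) := by
      apply integral_nonneg_pair s
      · have : (fun x => (x - s) * (fX x * fε (s - x)))
            = fun x => x * fX x * fε (s - x) - s * (fX x * fε (s - x)) := by
          funext x; ring
        rw [this]
        exact (Nint s).sub ((Dint s).const_mul s)
      · intro u
        have e : (s + u - s) * (fX (s + u) * fε (s - (s + u)))
            + (s - u - s) * (fX (s - u) * fε (s - (s - u)))
            = u * fε u * (fX (s + u) - fX (s - u)) := by
          have e1 : s - (s + u) = -u := by ring
          have e2 : s - (s - u) = u := by ring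
          rw [e1, e2, hεeven u]; ring
        rw [e]
        have hXcomp : ∀ w : ℝ, 0 ≤ w → fX (s - w) ≤ fX (s + w) := by
          intro w hw
          have h := unimX (s + w - μ) (s - w - μ) (by
            have := abs_add_le_abs_sub' (t := s - μ) (u := w) (by linarith) hw
            have e1 : s - μ + w = s + w - μ := by ring
            have e2 : s - μ - w = s - w - μ := by ring
            rwa [e1, e2] at this)
          have e1 : μ + (s + w - μ) = s + w := by ring
          have e2 : μ + (s - w - μ) = s - w := by ring
          rwa [e1, e2] at h
        rcases le_total 0 u with hu | hu
        · have := hXcomp u hu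
          have h1 : 0 ≤ u * fε u := mul_nonneg hu (hεpos u).le
          nlinarith
        · have := hXcomp (-u) (by linarith)
          have e1 : s + -u = s - u := by ring
          have e2 : s - -u = s + u := by ring
          rw [e1, e2] at this
          have h1 : u * fε u ≤ 0 := mul_nonpos_of_nonpos_of_nonneg hu (hεpos u).le
          nlinarith
    have expand : (∫ x, (x - s) * (fX x * fε (s - x)))
        = (∫ x, x * fX x * fε (s - x)) - s * ∫ x, fX x * fε (s - x) := by
      have : (fun x => (x - s) * (fX x * fε (s - x)))
          = fun x => x * fX x * fε (s - x) - s * (fX x * fε (s - x)) := by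
        funext x; ring
      rw [this, integral_sub (Nint s) ((Dint s).const_mul s), integral_const_mul]
    rw [expand] at key
    linarith
  -- reflection of posterior mean
  have m_reflect : ∀ s : ℝ, postMean fX fε (2 * μ - s) = 2 * μ - postMean fX fε s := by
    intro s
    have hDrefl : (∫ x, fX x * fε (2 * μ - s - x)) = ∫ x, fX x * fε (s - x) := by
      rw [← integral_flip (2 * μ) (fun x => fX x * fε (2 * μ - s - x))]
      congr 1
      funext x
      rw [hXrefl x]
      have e : 2 * μ - s - (2 * μ - x) = -(s - x) := by ring
      rw [e, hεeven]
    have hNrefl : (∫ x, x * fX x * fε (2 * μ - s - x))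
        = 2 * μ * (∫ x, fX x * fε (s - x)) - ∫ x, x * fX x * fε (s - x) := by
      rw [← integral_flip (2 * μ) (fun x => x * fX x * fε (2 * μ - s - x))]
      have : (fun x => (2 * μ - x) * fX (2 * μ - x) * fε (2 * μ - s - (2 * μ - x)))
          = fun x => 2 * μ * (fX x * fε (s - x)) - x * fX x * fε (s - x) := by
        funext x
        rw [hXrefl x]
        have e : 2 * μ - s - (2 * μ - x) = -(s - x) := by ring
        rw [e, hεeven]
        ring
      rw [this, integral_sub ((Dint s).const_mul (2 * μ)) (Nint s), integral_const_mul]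
    rw [postMean, postMean, hDrefl, hNrefl]
    field_simp [(Dpos s).ne']
  -- posterior mean bounds on the other side
  have m_ge' : ∀ s, μ ≤ s → μ ≤ postMean fX fε s := by
    intro s hs
    have h := m_le (2 * μ - s) (by linarith)
    have e : 2 * μ - (2 * μ - s) = s := by ring
    have hr := m_reflect (2 * μ - s)
    rw [e] at hr
    rw [hr]
    linarith
  have m_le' : ∀ s, μ ≤ s → postMean fX fε s ≤ s := by
    intro s hs
    have h := m_ge (2 * μ - s) (by linarith)
    have e : 2 * μ - (2 * μ - s) = s := by ring
    have hr := m_reflect (2 * μ - s)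
    rw [e] at hr
    rw [hr]
    linarith
  -- global bound on |m|
  have m_bound : ∀ s : ℝ, |postMean fX fε s| ≤ |s| + |μ| := by
    intro s
    rcases le_total s μ with hs | hs
    · have h1 := m_ge s hs
      have h2 := m_le s hs
      rw [abs_le]
      constructor
      · have := neg_abs_le s; linarith [abs_nonneg μ]
      · have := le_abs_self μ; linarith [abs_nonneg s]
    · have h1 := m_ge' s hs
      have h2 := m_le' s hs
      rw [abs_le]
      constructor
      · have := neg_abs_le μ; linarith [abs_nonneg s]
      · have := le_abs_self s; linarith [abs_nonneg μ]
  -- measurability of m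
  have mMeas : AEStronglyMeasurable (postMean fX fε) volume := by
    have hN : StronglyMeasurable (fun s => ∫ x, x * fX x * fε (s - x)) := by
      apply StronglyMeasurable.integral_prod_right'
        (f := fun p : ℝ × ℝ => p.2 * fX p.2 * fε (p.1 - p.2))
      exact ((continuous_snd.mul (hXc.comp continuous_snd)).mul
        (hεc.comp (continuous_fst.sub continuous_snd))).stronglyMeasurable
    have hD : StronglyMeasurable (fun s => ∫ x, fX x * fε (s - x)) := by
      apply StronglyMeasurable.integral_prod_right'
        (f := fun p : ℝ × ℝ => fX p.2 * fε (p.1 - p.2))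
      exact ((hXc.comp continuous_snd).mul
        (hεc.comp (continuous_fst.sub continuous_snd))).stronglyMeasurable
    exact (hN.measurable.div hD.measurable).aestronglyMeasurable
  -- integrability in s, for fixed x
  have I1 : ∀ x : ℝ, Integrable (fun s => fε (s - x)) := fun x => hεint.comp_sub_right x
  have Iabs : ∀ x : ℝ, Integrable (fun s => |s| * fε (s - x)) := by
    intro x
    have hb : Integrable (fun s => |s - x| * fε (s - x) + |x| * fε (s - x)) :=
      (hεmom.comp_sub_right x).add ((I1 x).const_mul |x|)
    refine Integrable.mono' hb ?_ ?_
    · exact (continuous_abs.mul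
        (hεc.comp (continuous_id.sub continuous_const))).aestronglyMeasurable
    · filter_upwards with s
      rw [Real.norm_eq_abs, abs_of_nonneg (mul_nonneg (abs_nonneg s) (hεpos _).le)]
      have : |s| ≤ |s - x| + |x| := by
        have := abs_sub_abs_le_abs_sub s x
        have h2 := abs_add_le (s - x) x
        calc |s| = |s - x + x| := by ring_nf
        _ ≤ |s - x| + |x| := abs_add_le _ _
      nlinarith [(hεpos (s - x)).le]
  have Im : ∀ x : ℝ, Integrable (fun s => postMean fX fε s * fε (s - x)) := by
    intro x
    have hb : Integrable (fun s => |s| * fε (s - x) + |μ| * fε (s - x)) :=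
      (Iabs x).add ((I1 x).const_mul |μ|)
    refine Integrable.mono' hb ?_ ?_
    · exact mMeas.mul
        (hεc.comp (continuous_id.sub continuous_const)).aestronglyMeasurable
    · filter_upwards with s
      rw [Real.norm_eq_abs, abs_mul, abs_of_nonneg (hεpos _).le]
      have := m_bound s
      nlinarith [(hεpos (s - x)).le]
  have Is : ∀ x : ℝ, Integrable (fun s => s * fε (s - x)) := by
    intro x
    refine Integrable.mono' (Iabs x) ?_ ?_
    · exact (continuous_id.mul
        (hεc.comp (continuous_id.sub continuous_const))).aestronglyMeasurable
    · filter_upwards with s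
      rw [Real.norm_eq_abs, abs_mul, abs_of_nonneg (hεpos _).le]
  -- first moment of noise is zero
  have Iu : Integrable (fun u => u * fε u) := by
    refine Integrable.mono' hεmom ?_ ?_
    · exact (continuous_id.mul hεc).aestronglyMeasurable
    · filter_upwards with u
      rw [Real.norm_eq_abs, abs_mul, abs_of_nonneg (hεpos _).le]
  have hmom0 : (∫ u, u * fε u) = 0 := by
    apply integral_eq_zero_pair 0
    · exact Iu
    · intro u
      simp only [zero_add, zero_sub]
      rw [hεeven u]
      ring
  -- ∫ s fε(s - x) ds = x
  have hmean : ∀ x : ℝ, (∫ s, s * fε (s - x)) = x := by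
    intro x
    have h1 := integral_sub_right_eq_self (μ := (volume : Measure ℝ)) (fun u => (u + x) * fε u) x
    have e : (fun s => (s - x + x) * fε (s - x)) = fun s => s * fε (s - x) := by
      funext s; ring_nf
    rw [e] at h1
    rw [h1]
    have e2 : (fun u => (u + x) * fε u) = fun u => u * fε u + x * fε u := by
      funext u; ring
    rw [e2, integral_add Iu (hεint.const_mul x), hmom0, integral_const_mul, hεone]
    ring
  -- ∫ fε(s - x) ds = 1
  have hone : ∀ x : ℝ, (∫ s, fε (s - x)) = 1 := by
    intro x
    rw [integral_sub_right_eq_self fε x, hεone]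
  -- the two key sign results for x ≤ μ
  have lower : ∀ x ≤ μ, x ≤ ∫ s, postMean fX fε s * fε (s - x) := by
    intro x hx
    have key : 0 ≤ ∫ s, (postMean fX fε s - s) * fε (s - x) := by
      apply integral_nonneg_pair μ
      · have : (fun s => (postMean fX fε s - s) * fε (s - x))
            = fun s => postMean fX fε s * fε (s - x) - s * fε (s - x) := by
          funext s; ring
        rw [this]
        exact (Im x).sub (Is x)
      · intro u
        have hm : postMean fX fε (μ - u) = 2 * μ - postMean fX fε (μ + u) := by
          have := m_reflect (μ + u)
          have e : 2 * μ - (μ + u) = μ - u := by ring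
          rwa [e] at this
        have e : (postMean fX fε (μ + u) - (μ + u)) * fε (μ + u - x)
            + (postMean fX fε (μ - u) - (μ - u)) * fε (μ - u - x)
            = (postMean fX fε (μ + u) - (μ + u))
              * (fε (μ + u - x) - fε (μ - u - x)) := by
          rw [hm]; ring
        rw [e]
        rcases le_total u 0 with hu | hu
        · have hA : 0 ≤ postMean fX fε (μ + u) - (μ + u) := by
            have := m_ge (μ + u) (by linarith)
            linarith
          have hB : fε (μ - u - x) ≤ fε (μ + u - x) := by
            apply unimε
            have := abs_add_le_abs_sub'' (t := μ - x) (u := u) (by linarith) hu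
            have e1 : μ - x + u = μ + u - x := by ring
            have e2 : μ - x - u = μ - u - x := by ring
            rwa [e1, e2] at this
          exact mul_nonneg hA (by linarith)
        · have hA : postMean fX fε (μ + u) - (μ + u) ≤ 0 := by
            have := m_le' (μ + u) (by linarith)
            linarith
          have hB : fε (μ + u - x) ≤ fε (μ - u - x) := by
            apply unimε
            have := abs_add_le_abs_sub'' (t := μ - x) (u := -u) (by linarith) (by linarith)
            have e1 : μ - x + -u = μ - u - x := by ring
            have e2 : μ - x - -u = μ + u - x := by ring
            rwa [e1, e2] at this
          nlinarith
    have expand : (∫ s, (postMean fX fε s - s) * fε (s - x))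
        = (∫ s, postMean fX fε s * fε (s - x)) - ∫ s, s * fε (s - x) := by
      have : (fun s => (postMean fX fε s - s) * fε (s - x))
          = fun s => postMean fX fε s * fε (s - x) - s * fε (s - x) := by
        funext s; ring
      rw [this, integral_sub (Im x) (Is x)]
    rw [expand, hmean x] at key
    linarith
  have upper : ∀ x ≤ μ, (∫ s, postMean fX fε s * fε (s - x)) ≤ μ := by
    intro x hx
    have key : 0 ≤ ∫ s, (μ - postMean fX fε s) * fε (s - x) := by
      apply integral_nonneg_pair μ
      · have : (fun s => (μ - postMean fX fε s) * fε (s - x))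
            = fun s => μ * fε (s - x) - postMean fX fε s * fε (s - x) := by
          funext s; ring
        rw [this]
        exact ((I1 x).const_mul μ).sub (Im x)
      · intro u
        have hm : postMean fX fε (μ - u) = 2 * μ - postMean fX fε (μ + u) := by
          have := m_reflect (μ + u)
          have e : 2 * μ - (μ + u) = μ - u := by ring
          rwa [e] at this
        have e : (μ - postMean fX fε (μ + u)) * fε (μ + u - x)
            + (μ - postMean fX fε (μ - u)) * fε (μ - u - x)
            = (μ - postMean fX fε (μ + u))
              * (fε (μ + u - x) - fε (μ - u - x)) := by
          rw [hm]; ring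
        rw [e]
        rcases le_total u 0 with hu | hu
        · have hA : 0 ≤ μ - postMean fX fε (μ + u) := by
            have := m_le (μ + u) (by linarith)
            linarith
          have hB : fε (μ - u - x) ≤ fε (μ + u - x) := by
            apply unimε
            have := abs_add_le_abs_sub'' (t := μ - x) (u := u) (by linarith) hu
            have e1 : μ - x + u = μ + u - x := by ring
            have e2 : μ - x - u = μ - u - x := by ring
            rwa [e1, e2] at this
          exact mul_nonneg hA (by linarith)
        · have hA : μ - postMean fX fε (μ + u) ≤ 0 := by
            have := m_ge' (μ + u) (by linarith)
            linarith
          have hB : fε (μ + u - x) ≤ fε (μ - u - x) := by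
            apply unimε
            have := abs_add_le_abs_sub'' (t := μ - x) (u := -u) (by linarith) (by linarith)
            have e1 : μ - x + -u = μ - u - x := by ring
            have e2 : μ - x - -u = μ + u - x := by ring
            rwa [e1, e2] at this
          nlinarith
    have expand : (∫ s, (μ - postMean fX fε s) * fε (s - x))
        = μ * (∫ s, fε (s - x)) - ∫ s, postMean fX fε s * fε (s - x) := by
      have : (fun s => (μ - postMean fX fε s) * fε (s - x))
          = fun s => μ * fε (s - x) - postMean fX fε s * fε (s - x) := by
        funext s; ring
      rw [this, integral_sub ((I1 x).const_mul μ) (Im x), integral_const_mul]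
    rw [expand, hone x] at key
    linarith
  -- reflection of the average posterior mean
  have g_reflect : ∀ x : ℝ,
      (∫ s, postMean fX fε s * fε (s - (2 * μ - x)))
        = 2 * μ - ∫ s, postMean fX fε s * fε (s - x) := by
    intro x
    have h1 : (∫ s, postMean fX fε s * fε (s - (2 * μ - x)))
        = ∫ s, (2 * μ - postMean fX fε s) * fε (s - x) := by
      rw [← integral_flip (2 * μ) (fun s => postMean fX fε s * fε (s - (2 * μ - x)))]
      congr 1
      funext s
      rw [m_reflect s]
      have e : 2 * μ - s - (2 * μ - x) = -(s - x) := by ring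
      rw [e, hεeven]
    rw [h1]
    have : (fun s => (2 * μ - postMean fX fε s) * fε (s - x))
        = fun s => (2 * μ) * fε (s - x) - postMean fX fε s * fε (s - x) := by
      funext s; ring
    rw [this, integral_sub ((I1 x).const_mul (2 * μ)) (Im x), integral_const_mul, hone x]
    ring
  refine ⟨fun x hx => ⟨lower x hx, upper x hx⟩, fun x hx => ?_⟩
  have hy : 2 * μ - x ≤ μ := by linarith
  have h1 := lower (2 * μ - x) hy
  have h2 := upper (2 * μ - x) hy
  have h3 := g_reflect x
  constructor <;> linarith

end
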